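/- arXiv:2104.03497 — 3 statements merged into one kernel-verified Lean document; each statement's English description precedes it below -/
import Mathlib

section
/- Let n ≥ 1 and let R, r, c > 0 with c > (R + r)^n. Then the n-dimensional Lebesgue measure of the set E = {x ∈ ℝⁿ : xₖ > R for all k, and ∏ₖ (xₖ + r) < c} is finite, and the limit of |E_c| / (c (log c)^(n-1)) as c → ∞ equals 1/(n-1)!. -/
open MeasureTheory Filter Set

noncomputable def Pp (n : ℕ) (L : ℝ) : ℝ :=
  ∑ j ∈ Finset.range n, (-1:ℝ)^(n-1-j) * L^j / (Nat.factorial j)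

def Sset (a c : ℝ) (n : ℕ) : Set (Fin n → ℝ) := {y | (∀ k, a < y k) ∧ ∏ k, y k < c}

lemma Sset_empty {a c : ℝ} (ha : 0 < a) {n : ℕ} (hn : 1 ≤ n) (hc : c ≤ a^n) :
    Sset a c n = ∅ := by
  ext y
  simp only [Sset, Set.mem_setOf_eq, Set.mem_empty_iff_false, iff_false, not_and]
  intro h1
  have : a ^ n < ∏ k, y k := by
    haveI : Nonempty (Fin n) := Fin.pos_iff_nonempty.mp hn
    have : ∏ _k : Fin n, a < ∏ k, y k :=
      Finset.prod_lt_prod_of_nonempty (fun i _ => ha) (fun i _ => h1 i) Finset.univ_nonempty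
    simpa using this
  linarith

lemma key_base {a : ℝ} (ha : 0 < a) {c : ℝ} (hc : a ^ 1 ≤ c) :
    0 ≤ c * Pp 1 (Real.log (c/a^1)) + (-1:ℝ)^1 * a^1 ∧
    volume (Sset a c 1) = ENNReal.ofReal (c * Pp 1 (Real.log (c/a^1)) + (-1:ℝ)^1 * a^1) := by
  rw [pow_one] at hc
  have hP : Pp 1 (Real.log (c/a^1)) = 1 := by simp [Pp]
  rw [hP]
  constructor
  · simp; linarith
  · have heq : Sset a c 1 = (MeasurableEquiv.funUnique (Fin 1) ℝ) ⁻¹' (Set.Ioo a c) := by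
      ext y
      simp only [Sset, Set.mem_setOf_eq, Set.mem_preimage, MeasurableEquiv.funUnique_apply,
        Set.mem_Ioo]
      constructor
      · rintro ⟨h1, h2⟩
        exact ⟨h1 _, by simpa using h2⟩
      · rintro ⟨h1, h2⟩
        refine ⟨fun k => by rw [Fin.eq_zero k]; exact h1, by simpa using h2⟩
    rw [heq]
    erw [(volume_preserving_funUnique (Fin 1) ℝ).measure_preimage
      measurableSet_Ioo.nullMeasurableSet, Real.volume_Ioo]
    congr 1
    ring

lemma hasDerivAt_G (n : ℕ) (a c M : ℝ) {x : ℝ} (hx : 0 < x) :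
    HasDerivAt (fun y => -c * (∑ j ∈ Finset.range n,
        (-1:ℝ)^(n-1-j) * (M - Real.log y)^(j+1) / (Nat.factorial (j+1))) + (-1)^n * a^n * y)
      ((c/x) * Pp n (M - Real.log x) + (-1)^n * a^n) x := by
  have hu : HasDerivAt (fun y => M - Real.log y) (-x⁻¹) x :=
    (Real.hasDerivAt_log (ne_of_gt hx)).const_sub M
  have hterm : ∀ j ∈ Finset.range n,
      HasDerivAt (fun y => (-1:ℝ)^(n-1-j) * (M - Real.log y)^(j+1) / (Nat.factorial (j+1)))
        ((-1:ℝ)^(n-1-j) * ((j+1) * (M - Real.log x)^j * -x⁻¹) / (Nat.factorial (j+1))) x := by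
    intro j _
    have := ((hu.pow (j+1)).const_mul ((-1:ℝ)^(n-1-j))).div_const ((Nat.factorial (j+1) : ℝ))
    simpa using this
  have hsum := HasDerivAt.sum hterm
  have hlin : HasDerivAt (fun y : ℝ => (-1:ℝ)^n * a^n * y) ((-1:ℝ)^n * a^n) x := by
    simpa using (hasDerivAt_id x).const_mul ((-1:ℝ)^n * a^n)
  have := ((HasDerivAt.fun_sum hterm).const_mul (-c)).add hlin
  refine this.congr_deriv (Eq.symm ?_)
  congr 1
  rw [Pp, Finset.mul_sum, Finset.mul_sum]
  apply Finset.sum_congr rfl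
  intro j _
  have hfac : ((Nat.factorial (j+1) : ℝ)) = (j+1) * (Nat.factorial j : ℝ) := by
    rw [Nat.factorial_succ]; push_cast; ring
  have h1 : (Nat.factorial j : ℝ) ≠ 0 := Nat.cast_ne_zero.2 j.factorial_ne_zero
  have h2 : ((j:ℝ)+1) ≠ 0 := by positivity
  rw [hfac]
  field_simp

lemma key {a : ℝ} (ha : 0 < a) (n : ℕ) (hn : 1 ≤ n) : ∀ c, a ^ n ≤ c →
    0 ≤ c * Pp n (Real.log (c/a^n)) + (-1:ℝ)^n * a^n ∧
    volume (Sset a c n) = ENNReal.ofReal (c * Pp n (Real.log (c/a^n)) + (-1:ℝ)^n * a^n) := by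
  induction n, hn using Nat.le_induction with
  | base => exact fun c hc => key_base ha hc
  | succ n hn IH =>
    intro c hc
    have han : (0:ℝ) < a ^ n := pow_pos ha n
    have han1 : (0:ℝ) < a ^ (n+1) := pow_pos ha (n+1)
    have hc0 : (0:ℝ) < c := lt_of_lt_of_le han1 hc
    set b := c / a ^ n with hb
    have hb0 : 0 < b := div_pos hc0 han
    have hab : a ≤ b := by
      rw [hb, le_div_iff₀ han]
      calc a * a ^ n = a ^ (n+1) := (pow_succ' a n).symm
        _ ≤ c := hc
    set M := Real.log b with hM
    set F : ℝ → ℝ := fun x => (c/x) * Pp n (M - Real.log x) + (-1:ℝ)^n * a^n with hF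
    have hFeq : ∀ x : ℝ, 0 < x →
        F x = (c/x) * Pp n (Real.log ((c/x)/a^n)) + (-1:ℝ)^n * a^n := by
      intro x hx
      have hbx : (c/x)/a^n = b/x := by rw [hb]; ring
      rw [hF]
      simp only
      rw [hbx, Real.log_div (ne_of_gt hb0) (ne_of_gt hx)]
    have hIH : ∀ x ∈ Icc a b, a ^ n ≤ c / x := by
      intro x hx
      have hx0 : 0 < x := lt_of_lt_of_le ha hx.1
      rw [le_div_iff₀ hx0]
      have h2 := (le_div_iff₀ han).1 hx.2
      nlinarith
    have hFnn : ∀ x ∈ Icc a b, 0 ≤ F x := by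
      intro x hx
      have hx0 : 0 < x := lt_of_lt_of_le ha hx.1
      rw [hFeq x hx0]
      exact (IH (c/x) (hIH x hx)).1
    have hne : ∀ x ∈ Icc a b, x ≠ 0 := fun x hx => ne_of_gt (lt_of_lt_of_le ha hx.1)
    have hFcont : ContinuousOn F (Icc a b) := by
      apply ContinuousOn.add ?_ continuousOn_const
      apply ContinuousOn.mul
      · exact ContinuousOn.div continuousOn_const continuousOn_id hne
      · unfold Pp
        apply continuousOn_finset_sum
        intro j _
        apply ContinuousOn.div_const
        apply ContinuousOn.mul continuousOn_const
        apply ContinuousOn.pow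
        exact continuousOn_const.sub (Real.continuousOn_log.mono (fun x hx => hne x hx))
    have hint : IntervalIntegrable F volume a b :=
      (hFcont.mono (by rw [uIcc_of_le hab])).intervalIntegrable
    set G : ℝ → ℝ := fun y => -c * (∑ j ∈ Finset.range n,
        (-1:ℝ)^(n-1-j) * (M - Real.log y)^(j+1) / (Nat.factorial (j+1))) + (-1)^n * a^n * y
      with hG
    have hFTC : ∫ x in a..b, F x = G b - G a := by
      apply intervalIntegral.integral_eq_sub_of_hasDerivAt ?_ hint
      intro x hx
      rw [uIcc_of_le hab] at hx
      exact hasDerivAt_G n a c M (lt_of_lt_of_le ha hx.1)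
    have hGb : G b = (-1:ℝ)^n * c := by
      rw [hG]
      simp only
      rw [hM, sub_self]
      have : ∀ j ∈ Finset.range n,
          (-1:ℝ)^(n-1-j) * (0:ℝ)^(j+1) / (Nat.factorial (j+1)) = 0 := by
        intro j _; simp [zero_pow (Nat.succ_ne_zero j)]
      rw [Finset.sum_congr rfl this]
      simp only [Finset.sum_const_zero, mul_zero, neg_zero, zero_add]
      rw [hb]
      field_simp
    have hL : Real.log (c/a^(n+1)) = M - Real.log a := by
      have h1 : c/a^(n+1) = b/a := by rw [hb, pow_succ]; ring
      rw [h1, hM, Real.log_div (ne_of_gt hb0) (ne_of_gt ha)]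
    set L := Real.log (c/a^(n+1)) with hLdef
    have hGa : G a = -c * (∑ j ∈ Finset.range n,
        (-1:ℝ)^(n-1-j) * L^(j+1) / (Nat.factorial (j+1))) + (-1)^n * a^(n+1) := by
      rw [hG]
      simp only
      rw [← hL, pow_succ]
      ring
    have hexpr : G b - G a = c * Pp (n+1) L + (-1:ℝ)^(n+1) * a^(n+1) := by
      rw [hGb, hGa, Pp, Finset.sum_range_succ']
      have hre : ∀ j ∈ Finset.range n,
          (-1:ℝ)^(n+1-1-(j+1)) * L^(j+1) / ((j+1).factorial : ℝ)
          = (-1:ℝ)^(n-1-j) * L^(j+1) / ((j+1).factorial : ℝ) := by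
        intro j _
        rw [show n+1-1-(j+1) = n-1-j from by omega]
      rw [Finset.sum_congr rfl hre]
      norm_num
      ring
    have hnn : 0 ≤ c * Pp (n+1) L + (-1:ℝ)^(n+1) * a^(n+1) := by
      rw [← hexpr, ← hFTC]
      exact intervalIntegral.integral_nonneg hab hFnn
    refine ⟨hnn, ?_⟩
    set T : Set (ℝ × (Fin n → ℝ)) :=
      {p | (a < p.1 ∧ ∀ k, a < p.2 k) ∧ p.1 * ∏ k, p.2 k < c} with hT
    have hTmeas : MeasurableSet T := by
      have hTeq : T = ({p : ℝ × (Fin n → ℝ) | a < p.1} ∩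
          ⋂ k, {p : ℝ × (Fin n → ℝ) | a < p.2 k}) ∩
          {p : ℝ × (Fin n → ℝ) | p.1 * ∏ k, p.2 k < c} := by
        ext p
        simp only [hT, Set.mem_setOf_eq, Set.mem_inter_iff, Set.mem_iInter]
      rw [hTeq]
      have m1 : MeasurableSet {p : ℝ × (Fin n → ℝ) | a < p.1} :=
        measurableSet_lt measurable_const measurable_fst
      have m2 : ∀ k : Fin n, MeasurableSet {p : ℝ × (Fin n → ℝ) | a < p.2 k} := fun k =>
        measurableSet_lt measurable_const (measurable_snd.eval)
      have mprod : Measurable (fun p : ℝ × (Fin n → ℝ) => p.1 * ∏ k, p.2 k) := by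
        apply Measurable.mul measurable_fst
        exact Finset.measurable_prod _ fun k _ => measurable_snd.eval
      have m3 : MeasurableSet {p : ℝ × (Fin n → ℝ) | p.1 * ∏ k, p.2 k < c} :=
        measurableSet_lt mprod measurable_const
      exact (m1.inter (MeasurableSet.iInter m2)).inter m3
    have hpre : Sset a c (n+1) = (MeasurableEquiv.piFinSuccAbove (fun _ : Fin (n+1) => ℝ) 0) ⁻¹' T := by
      ext y
      simp only [Sset, Set.mem_setOf_eq, Set.mem_preimage]
      have happ : (MeasurableEquiv.piFinSuccAbove (fun _ : Fin (n+1) => ℝ) 0) y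
          = (y 0, fun j => y j.succ) := by
        simp only [MeasurableEquiv.piFinSuccAbove_apply]
        rfl
      rw [happ, hT]
      simp only [Set.mem_setOf_eq]
      constructor
      · rintro ⟨h1, h2⟩
        exact ⟨⟨h1 0, fun k => h1 _⟩, by rwa [← Fin.prod_univ_succ]⟩
      · rintro ⟨⟨h0, h1⟩, h2⟩
        exact ⟨fun k => Fin.cases h0 h1 k, by rwa [Fin.prod_univ_succ]⟩
    have hsl : ∀ x : ℝ, a < x → Prod.mk x ⁻¹' T = Sset a (c/x) n := by
      intro x hxa
      have hx0 : 0 < x := lt_trans ha hxa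
      ext z
      simp only [hT, Set.mem_preimage, Set.mem_setOf_eq, Sset]
      constructor
      · rintro ⟨⟨_, h1⟩, h2⟩
        refine ⟨h1, ?_⟩
        rw [lt_div_iff₀ hx0, mul_comm]
        exact h2
      · rintro ⟨h1, h2⟩
        refine ⟨⟨hxa, h1⟩, ?_⟩
        rw [lt_div_iff₀ hx0] at h2
        rw [mul_comm]
        exact h2
    have hslice : ∀ x : ℝ, volume (Prod.mk x ⁻¹' T) =
        Set.indicator (Ioo a b) (fun x => ENNReal.ofReal (F x)) x := by
      intro x
      by_cases hx : x ∈ Ioo a b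
      · have hx0 : 0 < x := lt_trans ha hx.1
        rw [hsl x hx.1, (IH (c/x) (hIH x (Ioo_subset_Icc_self hx))).2,
          Set.indicator_of_mem hx, hFeq x hx0]
      · rw [Set.indicator_of_notMem hx]
        rw [Set.mem_Ioo, not_and_or] at hx
        push_neg at hx
        rcases hx with hx | hx
        · have : Prod.mk x ⁻¹' T = ∅ := by
            ext z
            simp only [hT, Set.mem_preimage, Set.mem_setOf_eq, Set.mem_empty_iff_false, iff_false]
            rintro ⟨⟨h0, -⟩, -⟩
            exact absurd h0 (not_lt.2 hx)
          simp [this]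
        · by_cases hxa : a < x
          · have hx0 : 0 < x := lt_trans ha hxa
            have hcx : c / x ≤ a ^ n := by
              have h1 : c / x ≤ c / b := by gcongr
              have h2 : c / b = a ^ n := by rw [hb]; field_simp
              linarith
            rw [hsl x hxa, Sset_empty ha hn hcx]
            simp
          · have : Prod.mk x ⁻¹' T = ∅ := by
              ext z
              simp only [hT, Set.mem_preimage, Set.mem_setOf_eq, Set.mem_empty_iff_false,
                iff_false]
              rintro ⟨⟨h0, -⟩, -⟩
              exact absurd h0 hxa
            simp [this]
    have hvol : volume (Sset a c (n+1)) = ∫⁻ x : ℝ, volume (Prod.mk x ⁻¹' T) := by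
      rw [hpre, (volume_preserving_piFinSuccAbove (fun _ : Fin (n+1) => ℝ) 0).measure_preimage
        hTmeas.nullMeasurableSet]
      exact Measure.prod_apply hTmeas
    have hInt : IntegrableOn F (Ioo a b) volume :=
      (hFcont.integrableOn_Icc).mono_set Ioo_subset_Icc_self
    have hae : 0 ≤ᵐ[volume.restrict (Ioo a b)] F :=
      (ae_restrict_iff' measurableSet_Ioo).2 (ae_of_all _ fun x hx => hFnn x (Ioo_subset_Icc_self hx))
    calc volume (Sset a c (n+1)) = ∫⁻ x : ℝ, volume (Prod.mk x ⁻¹' T) := hvol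
      _ = ∫⁻ x : ℝ, Set.indicator (Ioo a b) (fun x => ENNReal.ofReal (F x)) x :=
          lintegral_congr hslice
      _ = ∫⁻ x in Ioo a b, ENNReal.ofReal (F x) := lintegral_indicator measurableSet_Ioo _
      _ = ENNReal.ofReal (∫ x in Ioo a b, F x) := (ofReal_integral_eq_lintegral_ofReal hInt hae).symm
      _ = ENNReal.ofReal (c * Pp (n+1) L + (-1:ℝ)^(n+1) * a^(n+1)) := by
          rw [← integral_Ioc_eq_integral_Ioo, ← intervalIntegral.integral_of_le hab, hFTC, hexpr]

lemma tendsto_aux (K : ℝ) (n : ℕ) (hn : 1 ≤ n) :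
    Tendsto (fun L : ℝ => Pp n (L - K) / L^(n-1)) atTop
      (nhds (1 / (Nat.factorial (n-1) : ℝ))) := by
  have hbase : Tendsto (fun L : ℝ => (L-K)/L) atTop (nhds 1) := by
    have h1 : Tendsto (fun L : ℝ => 1 - K * L⁻¹) atTop (nhds (1 - K * 0)) :=
      tendsto_const_nhds.sub (tendsto_inv_atTop_zero.const_mul K)
    rw [mul_zero, sub_zero] at h1
    apply h1.congr'
    filter_upwards [eventually_ne_atTop (0:ℝ)] with L hL
    field_simp
  have hterm : ∀ j ∈ Finset.range n, Tendsto (fun L : ℝ =>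
      ((-1:ℝ)^(n-1-j) / (Nat.factorial j)) * (((L-K)/L)^j * (1/L^(n-1-j)))) atTop
      (nhds (if j = n-1 then (1 / (Nat.factorial (n-1) : ℝ)) else 0)) := by
    intro j hj
    rcases eq_or_ne j (n-1) with h | h
    · rw [if_pos h, h, Nat.sub_self]
      have h2 : Tendsto (fun L : ℝ => ((L-K)/L)^(n-1)) atTop (nhds 1) := by
        simpa using hbase.pow (n-1)
      have h3 := h2.const_mul ((-1:ℝ)^(0:ℕ) / (Nat.factorial (n-1)))
      simp only [pow_zero, mul_one] at h3 ⊢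
      simpa using h3
    · rw [if_neg h]
      have hm : n-1-j ≠ 0 := by
        have := Finset.mem_range.1 hj
        omega
      have h2 : Tendsto (fun L : ℝ => 1/L^(n-1-j)) atTop (nhds 0) :=
        tendsto_const_nhds.div_atTop (tendsto_pow_atTop hm)
      have h3 := (hbase.pow j).mul h2
      rw [mul_zero] at h3
      have h4 := h3.const_mul ((-1:ℝ)^(n-1-j) / (Nat.factorial j))
      rw [mul_zero] at h4
      exact h4
  have hsum := tendsto_finset_sum (Finset.range n) hterm
  have hval : (∑ j ∈ Finset.range n, if j = n-1 then (1 / (Nat.factorial (n-1) : ℝ)) else 0)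
      = 1 / (Nat.factorial (n-1) : ℝ) := by
    rw [Finset.sum_ite_eq' (Finset.range n) (n-1) (fun _ => 1 / (Nat.factorial (n-1) : ℝ))]
    rw [if_pos (Finset.mem_range.2 (by omega))]
  rw [hval] at hsum
  apply hsum.congr'
  filter_upwards [eventually_gt_atTop (0:ℝ)] with L hL
  rw [Pp, Finset.sum_div]
  apply Finset.sum_congr rfl
  intro j hj
  have hj' : j ≤ n-1 := by
    have := Finset.mem_range.1 hj
    omega
  have hsplit : L^(n-1) = L^j * L^(n-1-j) := by
    rw [← pow_add]
    congr 1
    omega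
  have hL0 : L ≠ 0 := ne_of_gt hL
  rw [div_pow, hsplit]
  field_simp

theorem volume_asymptotics (n : ℕ) (hn : 1 ≤ n) (R r : ℝ) (hR : 0 < R) (hr : 0 < r) :
    (∀ c : ℝ, (R + r) ^ n < c →
      volume {x : Fin n → ℝ | (∀ k, R < x k) ∧ (∏ k, (x k + r)) < c} < ⊤) ∧
    Tendsto
      (fun c : ℝ =>
        (volume {x : Fin n → ℝ | (∀ k, R < x k) ∧ (∏ k, (x k + r)) < c}).toReal /
          (c * (Real.log c) ^ (n - 1)))
      atTop (nhds (1 / (Nat.factorial (n - 1) : ℝ))) := by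
  have ha : 0 < R + r := by linarith
  have hvol : ∀ c : ℝ, volume {x : Fin n → ℝ | (∀ k, R < x k) ∧ (∏ k, (x k + r)) < c}
      = volume (Sset (R+r) c n) := by
    intro c
    have htrans : {x : Fin n → ℝ | (∀ k, R < x k) ∧ (∏ k, (x k + r)) < c}
        = (fun x => x + fun _ => r) ⁻¹' (Sset (R+r) c n) := by
      ext x
      simp only [Set.mem_setOf_eq, Set.mem_preimage, Sset, Pi.add_apply]
      constructor
      · rintro ⟨h1, h2⟩
        exact ⟨fun k => by linarith [h1 k], h2⟩
      · rintro ⟨h1, h2⟩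
        exact ⟨fun k => by linarith [h1 k], h2⟩
    rw [htrans, measure_preimage_add_right]
  constructor
  · intro c hcs
    rw [hvol, (key ha n hn c (le_of_lt hcs)).2]
    exact ENNReal.ofReal_lt_top
  · set K := Real.log ((R+r) ^ n) with hK
    have hA : Tendsto (fun c : ℝ => Pp n (Real.log c - K) / (Real.log c)^(n-1)) atTop
        (nhds (1/(Nat.factorial (n-1):ℝ))) := (tendsto_aux K n hn).comp Real.tendsto_log_atTop
    have hmul : Tendsto (fun c : ℝ => c * (Real.log c)^(n-1)) atTop atTop := by
      apply tendsto_atTop_mono' atTop ?_ tendsto_id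
      filter_upwards [Real.tendsto_log_atTop.eventually_ge_atTop 1,
        eventually_ge_atTop (0:ℝ)] with c h1 h0
      calc id c = c * 1 := (mul_one c).symm
        _ ≤ c * (Real.log c)^(n-1) := by
            apply mul_le_mul_of_nonneg_left _ h0
            exact one_le_pow₀ h1
    have hB : Tendsto (fun c : ℝ => (-1:ℝ)^n * (R+r)^n / (c * (Real.log c)^(n-1))) atTop
        (nhds 0) := tendsto_const_nhds.div_atTop hmul
    have hlim := hA.add hB
    rw [add_zero] at hlim
    apply Filter.Tendsto.congr' _ hlim
    filter_upwards [eventually_ge_atTop ((R+r)^n), eventually_gt_atTop (1:ℝ)] with c hc1 hc2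
    have hc0 : (0:ℝ) < c := lt_trans one_pos hc2
    have hlc : 0 < Real.log c := Real.log_pos hc2
    have hkey := key ha n hn c hc1
    rw [hvol, hkey.2, ENNReal.toReal_ofReal hkey.1]
    have hlog : Real.log (c/(R+r)^n) = Real.log c - K := by
      rw [Real.log_div (ne_of_gt hc0) (ne_of_gt (pow_pos ha n)), hK]
    rw [hlog]
    have hd : (Real.log c)^(n-1) ≠ 0 := pow_ne_zero _ (ne_of_gt hlc)
    field_simp
end

section
/- Let f : ℝ → ℝ be nonnegative, supported in [-r, r], continuous on [-r, r], bounded above by A, and bounded below by ε/(2r) on [-r, r], where A, r, ε > 0. Set R = (2r)² A / ε + r. Then for every x > R, the supremum over all intervals [a, b] with a ≤ x ≤ b, a < b, of (1/(b-a)) ∫_a^b f equals (1/(x + r)) ∫_{-r}^r f. -/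
open MeasureTheory

theorem maximal_far_away (r A eps : ℝ) (hr : 0 < r) (hA : 0 < A) (heps : 0 < eps)
    (f : ℝ → ℝ) (hf0 : ∀ y, 0 ≤ f y)
    (hsupp : ∀ y, y ∉ Set.Icc (-r) r → f y = 0)
    (hcont : ContinuousOn f (Set.Icc (-r) r))
    (hub : ∀ y ∈ Set.Icc (-r) r, f y ≤ A)
    (hlb : ∀ y ∈ Set.Icc (-r) r, eps / (2 * r) ≤ f y)
    (R : ℝ) (hRdef : R = (2 * r) ^ 2 * A / eps + r) :
    ∀ x : ℝ, R < x →
      (⨆ (a : ℝ) (b : ℝ) (_ : a ≤ x) (_ : x ≤ b) (_ : a < b),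
          (1 / (b - a)) * ∫ y in a..b, f y) =
        (1 / (x + r)) * ∫ y in (-r)..r, f y := by
  intro x hx
  have hRr : r < R := by
    rw [hRdef]
    have : 0 < (2 * r) ^ 2 * A / eps := by positivity
    linarith
  have hxr : r < x := lt_trans hRr hx
  have hxpos : 0 < x + r := by linarith
  -- integrability
  have hfind : f = (Set.Icc (-r) r).indicator f := by
    funext y
    by_cases h : y ∈ Set.Icc (-r) r
    · simp [Set.indicator_of_mem h]
    · simp [Set.indicator_of_notMem h, hsupp y h]
  have hInt : Integrable f := by
    rw [hfind]
    exact (hcont.integrableOn_Icc).integrable_indicator measurableSet_Icc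
  have hII : ∀ a b : ℝ, IntervalIntegrable f volume a b := fun a b =>
    hInt.intervalIntegrable
  -- zero integrals outside support
  have hae_ne : ∀ c : ℝ, ∀ᵐ y : ℝ, y ≠ c := fun c => by
    rw [ae_iff]
    simpa using measure_singleton (α := ℝ) c
  have hzero_right : ∀ c d : ℝ, r ≤ c → c ≤ d → (∫ y in c..d, f y) = 0 := by
    intro c d hc hcd
    rw [show (0:ℝ) = ∫ y in c..d, (0:ℝ) by simp]
    apply intervalIntegral.integral_congr_ae
    filter_upwards with y hmem
    rw [Set.uIoc_of_le hcd] at hmem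
    exact hsupp y (by simp only [Set.mem_Icc, not_and_or, not_le]; right; linarith [hmem.1])
  have hzero_left : ∀ c : ℝ, c ≤ -r → (∫ y in c..(-r), f y) = 0 := by
    intro c hc
    rw [show (0:ℝ) = ∫ y in c..(-r), (0:ℝ) by simp]
    apply intervalIntegral.integral_congr_ae
    filter_upwards [hae_ne (-r)] with y hy hmem
    rw [Set.uIoc_of_le hc] at hmem
    exact hsupp y (by
      simp only [Set.mem_Icc, not_and_or, not_le]
      left
      exact lt_of_le_of_ne hmem.2 hy)
  set I : ℝ := ∫ y in (-r)..r, f y with hIdef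
  have hI0 : 0 ≤ I := intervalIntegral.integral_nonneg (by linarith) (fun y _ => hf0 y)
  -- main bound
  have hmain : ∀ a b : ℝ, a ≤ x → x ≤ b → a < b →
      (1 / (b - a)) * ∫ y in a..b, f y ≤ (1 / (x + r)) * I := by
    intro a b hax hxb hab
    have hba : 0 < b - a := by linarith
    have hrb : r ≤ b := by linarith
    rcases le_or_gt a (-r) with ha | ha
    · -- a ≤ -r : integral over [a,b] equals I
      have h1 : ∫ y in a..b, f y = I := by
        rw [← intervalIntegral.integral_add_adjacent_intervals (hII a (-r)) (hII (-r) b),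
            ← intervalIntegral.integral_add_adjacent_intervals (hII (-r) r) (hII r b),
            hzero_left a ha, hzero_right r b le_rfl hrb]
        ring_nf
        exact hIdef.symm
      rw [h1, one_div_mul_eq_div, one_div_mul_eq_div]
      exact div_le_div_of_nonneg_left hI0 hxpos (by linarith)
    · rcases le_or_gt r a with har | har
      · -- a ≥ r : integral is 0
        rw [hzero_right a b har hab.le, mul_zero]
        positivity
      · -- -r < a < r
        have hsplit : ∫ y in a..b, f y = ∫ y in a..r, f y := by
          rw [← intervalIntegral.integral_add_adjacent_intervals (hII a r) (hII r b),
              hzero_right r b le_rfl hrb, add_zero]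
        set J : ℝ := ∫ y in a..r, f y with hJdef
        set K : ℝ := ∫ y in (-r)..a, f y with hKdef
        have hIKJ : I = K + J := by
          rw [hIdef, hJdef, hKdef,
            intervalIntegral.integral_add_adjacent_intervals (hII (-r) a) (hII a r)]
        have hJ0 : 0 ≤ J := intervalIntegral.integral_nonneg har.le (fun y _ => hf0 y)
        have hJA : J ≤ A * (r - a) := by
          have := intervalIntegral.integral_mono_on (μ := volume) har.le (hII a r)
            (intervalIntegrable_const (c := A))
            (fun y hy => hub y ⟨by linarith [hy.1], hy.2⟩)
          simpa [smul_eq_mul, mul_comm] using this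
        have hK : (a + r) * (eps / (2 * r)) ≤ K := by
          have h := intervalIntegral.integral_mono_on (μ := volume) (by linarith : -r ≤ a)
            (intervalIntegrable_const (c := eps / (2 * r))) (hII (-r) a)
            (fun y hy => hlb y ⟨hy.1, by linarith [hy.2]⟩)
          rw [intervalIntegral.integral_const, smul_eq_mul] at h
          calc (a + r) * (eps / (2 * r)) = (a - -r) * (eps / (2 * r)) := by ring
            _ ≤ K := h
        have hx2 : (2 * r) ^ 2 * A < (x - r) * eps := by
          rw [hRdef] at hx
          have h' : (2 * r) ^ 2 * A / eps < x - r := by linarith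
          calc (2 * r) ^ 2 * A = ((2 * r) ^ 2 * A / eps) * eps := by field_simp
            _ < (x - r) * eps := by
                exact mul_lt_mul_of_pos_right h' heps
        -- key inequality : J * (x + r) ≤ I * (b - a)
        have hkey : J * (x + r) ≤ I * (b - a) := by
          have step1 : A * (r - a) ≤ eps / (2 * r) * (x - a) := by
            rw [div_mul_eq_mul_div, le_div_iff₀ (by linarith : (0:ℝ) < 2 * r)]
            nlinarith [mul_nonneg (mul_nonneg hr.le hA.le) (by linarith : (0:ℝ) ≤ r + a),
              mul_nonneg heps.le (by linarith : (0:ℝ) ≤ r - a)]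
          have e1 : J * (a + r) ≤ A * (r - a) * (a + r) :=
            mul_le_mul_of_nonneg_right hJA (by linarith)
          have e3 : A * (r - a) * (a + r) ≤ (a + r) * (eps / (2 * r)) * (x - a) := by
            have := mul_le_mul_of_nonneg_left step1 (by linarith : (0:ℝ) ≤ a + r)
            nlinarith [this]
          have e2 : (a + r) * (eps / (2 * r)) * (x - a) ≤ K * (x - a) :=
            mul_le_mul_of_nonneg_right hK (by linarith)
          have h1 : J * (x + r) ≤ (K + J) * (x - a) := by nlinarith [e1, e2, e3]
          have h2 : (K + J) * (x - a) ≤ (K + J) * (b - a) :=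
            mul_le_mul_of_nonneg_left (by linarith) (by rw [← hIKJ]; exact hI0)
          rw [hIKJ]
          linarith
        rw [hsplit, one_div_mul_eq_div, one_div_mul_eq_div, div_le_div_iff₀ hba hxpos]
        linarith
  have hB0 : 0 ≤ (1 / (x + r)) * I := by positivity
  -- bound on inner sup
  have hg : ∀ a b : ℝ,
      (⨆ (_ : a ≤ x) (_ : x ≤ b) (_ : a < b), (1 / (b - a)) * ∫ y in a..b, f y)
        ≤ (1 / (x + r)) * I := by
    intro a b
    refine Real.iSup_le (fun h1 => ?_) hB0
    refine Real.iSup_le (fun h2 => ?_) hB0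
    refine Real.iSup_le (fun h3 => ?_) hB0
    exact hmain a b h1 h2 h3
  apply le_antisymm
  · refine Real.iSup_le (fun a => ?_) hB0
    exact Real.iSup_le (fun b => hg a b) hB0
  · have hattain : (1 / (x + r)) * I =
        ⨆ (_ : -r ≤ x) (_ : x ≤ x) (_ : -r < x), (1 / (x - -r)) * ∫ y in (-r)..x, f y := by
      rw [ciSup_pos (by linarith : -r ≤ x), ciSup_pos le_rfl, ciSup_pos (by linarith : -r < x)]
      have h1 : ∫ y in (-r)..x, f y = I := by
        rw [← intervalIntegral.integral_add_adjacent_intervals (hII (-r) r) (hII r x),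
          hzero_right r x le_rfl hxr.le, add_zero]
      rw [h1, show x - -r = x + r by ring]
    rw [hattain]
    have hbdd1 : BddAbove (Set.range fun b =>
        ⨆ (_ : -r ≤ x) (_ : x ≤ b) (_ : -r < b), (1 / (b - -r)) * ∫ y in (-r)..b, f y) := by
      refine ⟨(1 / (x + r)) * I, ?_⟩
      rintro _ ⟨b, rfl⟩
      exact hg (-r) b
    have hbdd2 : BddAbove (Set.range fun a => ⨆ (b : ℝ),
        ⨆ (_ : a ≤ x) (_ : x ≤ b) (_ : a < b), (1 / (b - a)) * ∫ y in a..b, f y) := by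
      refine ⟨(1 / (x + r)) * I, ?_⟩
      rintro _ ⟨a, rfl⟩
      exact Real.iSup_le (fun b => hg a b) hB0
    calc (⨆ (_ : -r ≤ x) (_ : x ≤ x) (_ : -r < x), (1 / (x - -r)) * ∫ y in (-r)..x, f y)
        ≤ ⨆ (b : ℝ), ⨆ (_ : -r ≤ x) (_ : x ≤ b) (_ : -r < b),
            (1 / (b - -r)) * ∫ y in (-r)..b, f y := le_ciSup hbdd1 x
      _ ≤ ⨆ (a : ℝ) (b : ℝ) (_ : a ≤ x) (_ : x ≤ b) (_ : a < b),
            (1 / (b - a)) * ∫ y in a..b, f y := le_ciSup hbdd2 (-r)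
end

section
/- The uncentered Hardy–Littlewood maximal operator M satisfies: for f = χ_{B(0,1)} the indicator of the unit ball in ℝⁿ, lim_{λ → 1⁻} λ · |{x ∈ ℝⁿ : M f(x) > λ}| = |B(0,1)| = ‖χ_{B(0,1)}‖_{L¹(ℝⁿ)}. -/
open MeasureTheory Metric

/-- The uncentered Hardy–Littlewood maximal function on ℝⁿ. -/
noncomputable def uncenteredMaximal (n : ℕ) (f : EuclideanSpace ℝ (Fin n) → ℝ)
    (x : EuclideanSpace ℝ (Fin n)) : ℝ :=
  ⨆ (c : EuclideanSpace ℝ (Fin n)) (ρ : ℝ) (_ : x ∈ Metric.ball c ρ),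
    (volume (Metric.ball c ρ)).toReal⁻¹ * ∫ y in Metric.ball c ρ, |f y|

section aux
variable (n : ℕ)

local notation "E" => EuclideanSpace ℝ (Fin n)

noncomputable def fB : E → ℝ := (Metric.ball (0 : E) 1).indicator (fun _ => (1 : ℝ))

lemma integral_fB (c : E) (ρ : ℝ) :
    ∫ y in ball c ρ, |fB n y| = (volume (ball (0 : E) 1 ∩ ball c ρ)).toReal := by
  have h1 : ∀ y : E, |fB n y| = (ball (0:E) 1).indicator (fun _ => (1:ℝ)) y := by
    intro y
    unfold fB
    by_cases hy : y ∈ ball (0:E) 1 <;> simp [hy]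
  simp_rw [h1]
  rw [MeasureTheory.integral_indicator_const _ measurableSet_ball]
  rw [measureReal_def, Measure.restrict_apply measurableSet_ball]
  simp

lemma term_le_one (c : E) (ρ : ℝ) :
    (volume (ball c ρ)).toReal⁻¹ * ∫ y in ball c ρ, |fB n y| ≤ 1 := by
  rw [integral_fB]
  set a := (volume (ball c ρ)).toReal with ha
  have hb : (volume (ball (0 : E) 1 ∩ ball c ρ)).toReal ≤ a :=
    ENNReal.toReal_mono measure_ball_lt_top.ne (measure_mono Set.inter_subset_right)
  have ha0 : 0 ≤ a := ENNReal.toReal_nonneg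
  calc a⁻¹ * (volume (ball (0 : E) 1 ∩ ball c ρ)).toReal ≤ a⁻¹ * a := by
        gcongr
    _ ≤ 1 := by
        rcases eq_or_ne a 0 with h | h
        · simp [h]
        · simp [inv_mul_cancel₀ h]

lemma max_le_one (x : E) : uncenteredMaximal n (fB n) x ≤ 1 := by
  refine Real.iSup_le (fun c => Real.iSup_le (fun ρ => Real.iSup_le (fun _ => term_le_one n c ρ) zero_le_one) zero_le_one) zero_le_one

lemma term_le_max {x : E} {c : E} {ρ : ℝ} (hx : x ∈ ball c ρ) :
    (volume (ball c ρ)).toReal⁻¹ * ∫ y in ball c ρ, |fB n y| ≤ uncenteredMaximal n (fB n) x := by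
  have bdd1 : ∀ c : E, (⨆ (ρ : ℝ) (_ : x ∈ ball c ρ),
      (volume (ball c ρ)).toReal⁻¹ * ∫ y in ball c ρ, |fB n y|) ≤ 1 := fun c =>
    Real.iSup_le (fun ρ => Real.iSup_le (fun _ => term_le_one n c ρ) zero_le_one) zero_le_one
  calc (volume (ball c ρ)).toReal⁻¹ * ∫ y in ball c ρ, |fB n y|
      = ⨆ (_ : x ∈ ball c ρ), (volume (ball c ρ)).toReal⁻¹ * ∫ y in ball c ρ, |fB n y| :=
        (ciSup_pos (p := x ∈ ball c ρ)
          (f := fun _ => (volume (ball c ρ)).toReal⁻¹ * ∫ y in ball c ρ, |fB n y|) hx).symm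
    _ ≤ ⨆ (ρ : ℝ) (_ : x ∈ ball c ρ), (volume (ball c ρ)).toReal⁻¹ * ∫ y in ball c ρ, |fB n y| := by
        apply le_ciSup (f := fun ρ => ⨆ (_ : x ∈ ball c ρ), (volume (ball c ρ)).toReal⁻¹ * ∫ y in ball c ρ, |fB n y|)
        refine ⟨1, Set.forall_mem_range.mpr fun ρ => Real.iSup_le (fun _ => term_le_one n c ρ) zero_le_one⟩
    _ ≤ uncenteredMaximal n (fB n) x := by
        apply le_ciSup (f := fun c => ⨆ (ρ : ℝ) (_ : x ∈ ball c ρ), (volume (ball c ρ)).toReal⁻¹ * ∫ y in ball c ρ, |fB n y|)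
        exact ⟨1, Set.forall_mem_range.mpr bdd1⟩

lemma exists_ball_of_lt {x : E} {lam : ℝ} (hlam : 0 < lam)
    (h : lam < uncenteredMaximal n (fB n) x) :
    ∃ c ρ, x ∈ ball c ρ ∧
      lam < (volume (ball c ρ)).toReal⁻¹ * (volume (ball (0 : E) 1 ∩ ball c ρ)).toReal := by
  by_contra hcon
  push_neg at hcon
  have : uncenteredMaximal n (fB n) x ≤ lam := by
    refine Real.iSup_le (fun c => Real.iSup_le (fun ρ => Real.iSup_le (fun hx => ?_) hlam.le) hlam.le) hlam.le
    rw [integral_fB]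
    exact hcon c ρ hx
  linarith

lemma lower_incl {lam : ℝ} (hlam : lam < 1) :
    ball (0 : E) 1 ⊆ {x : E | lam < uncenteredMaximal n (fB n) x} := by
  intro x hx
  have hxn : ‖x‖ < 1 := by simpa [mem_ball, dist_eq_norm] using hx
  have hρ : (0 : ℝ) < 1 - ‖x‖ := by linarith
  have hsub : ball x (1 - ‖x‖) ⊆ ball (0 : E) 1 := by
    apply ball_subset_ball'
    simp [dist_eq_norm]
  have hinter : ball (0 : E) 1 ∩ ball x (1 - ‖x‖) = ball x (1 - ‖x‖) :=
    Set.inter_eq_self_of_subset_right hsub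
  have hpos : 0 < (volume (ball x (1 - ‖x‖))).toReal :=
    ENNReal.toReal_pos (measure_ball_pos _ _ hρ).ne' measure_ball_lt_top.ne
  have hterm : (volume (ball x (1 - ‖x‖))).toReal⁻¹ * ∫ y in ball x (1 - ‖x‖), |fB n y| = 1 := by
    rw [integral_fB, hinter, inv_mul_cancel₀ hpos.ne']
  have := term_le_max n (x := x) (c := x) (ρ := 1 - ‖x‖) (mem_ball_self hρ)
  rw [hterm] at this
  exact lt_of_lt_of_le hlam this

lemma upper_incl {lam : ℝ} (hlam1 : 1/2 < lam) (hlam2 : lam < 1) :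
    {x : E | lam < uncenteredMaximal n (fB n) x} ⊆
      closedBall (0 : E) (1 + 2 * ((1 - lam)/lam) ^ (1/(n:ℝ))) := by
  have hlam0 : 0 < lam := by linarith
  have hq0 : 0 ≤ (1 - lam)/lam := div_nonneg (by linarith) hlam0.le
  set δ : ℝ := ((1 - lam)/lam) ^ (1/(n:ℝ)) with hδ
  have hδ0 : 0 ≤ δ := Real.rpow_nonneg hq0 _
  intro x hx
  simp only [Set.mem_setOf_eq] at hx
  rcases le_or_gt ‖x‖ 1 with hx1 | hx1
  · simp only [mem_closedBall, dist_eq_norm, sub_zero]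
    linarith
  obtain ⟨c, ρ, hmem, hterm⟩ := exists_ball_of_lt n hlam0 hx
  set v := (volume (ball (0 : E) 1)).toReal with hv
  have hv0 : 0 < v := ENNReal.toReal_pos (measure_ball_pos _ _ one_pos).ne' measure_ball_lt_top.ne
  set a := (volume (ball c ρ)).toReal with ha
  set b := (volume (ball (0 : E) 1 ∩ ball c ρ)).toReal with hb
  have hba : b ≤ a := ENNReal.toReal_mono measure_ball_lt_top.ne (measure_mono Set.inter_subset_right)
  have hbv : b ≤ v := ENNReal.toReal_mono measure_ball_lt_top.ne (measure_mono Set.inter_subset_left)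
  have ha0 : 0 < a := by
    by_contra h
    push_neg at h
    have : a = 0 := le_antisymm h ENNReal.toReal_nonneg
    rw [this] at hterm
    simp at hterm
    linarith
  have hab : lam * a < b := by
    have h2 : lam < b / a := by rwa [div_eq_inv_mul]
    exact (lt_div_iff₀ ha0).mp h2
  have hb0 : 0 < b := lt_of_le_of_lt (by positivity) hab
  -- the ball intersects the unit ball
  have hne : (ball (0 : E) 1 ∩ ball c ρ).Nonempty := by
    apply nonempty_of_measure_ne_zero (μ := volume)
    intro h
    rw [hb, h] at hb0; simp at hb0
  obtain ⟨y, hy1, hy2⟩ := hne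
  have hy1' : ‖y‖ < 1 := by simpa [mem_ball, dist_eq_norm] using hy1
  have hy2' : ‖y - c‖ < ρ := by simpa [mem_ball, dist_eq_norm] using hy2
  have hxc : ‖x - c‖ < ρ := by simpa [mem_ball, dist_eq_norm] using hmem
  set d := ‖x‖ - 1 with hd
  have hd0 : 0 < d := by simp [hd]; linarith
  have hρd : d/2 < ρ := by
    have : ‖x - y‖ < 2 * ρ := by
      calc ‖x - y‖ ≤ ‖x - c‖ + ‖y - c‖ := by
            rw [show x - y = (x - c) - (y - c) by abel]; exact norm_sub_le _ _
        _ < 2 * ρ := by linarith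
    have : ‖x‖ < 1 + 2 * ρ := by
      have h3 : ‖x‖ ≤ ‖x - y‖ + ‖y‖ := by
        simpa using norm_add_le (x - y) y
      linarith
    simp [hd]; linarith
  -- find z such that ball z (d/2) ⊆ ball c ρ \ ball 0 1
  have hz : ∃ z : E, ‖z - c‖ ≤ ρ - d/2 ∧ 1 + d/2 ≤ ‖z‖ := by
    rcases le_or_gt (d/2) ‖x - c‖ with hcase | hcase
    · have hxc0 : x - c ≠ 0 := by
        intro h; rw [h] at hcase; simp at hcase; linarith
      refine ⟨x - (d/2 / ‖x - c‖) • (x - c), ?_, ?_⟩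
      · have : x - (d/2 / ‖x - c‖) • (x - c) - c = (1 - d/2 / ‖x - c‖) • (x - c) := by
          rw [sub_smul, one_smul]; abel
        rw [this, norm_smul]
        have h4 : 0 < ‖x - c‖ := norm_pos_iff.mpr hxc0
        have h5 : (0:ℝ) ≤ 1 - d/2/‖x - c‖ := by
          rw [sub_nonneg, div_le_one h4]; exact hcase
        rw [Real.norm_eq_abs, abs_of_nonneg h5, sub_mul, one_mul, div_mul_cancel₀ _ h4.ne']
        linarith
      · have h6 : ‖(d/2 / ‖x - c‖) • (x - c)‖ = d/2 := by
          rw [norm_smul, Real.norm_eq_abs, abs_of_nonneg (by positivity),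
            div_mul_cancel₀ _ (norm_pos_iff.mpr hxc0).ne']
        have := norm_sub_norm_le x ((d/2 / ‖x - c‖) • (x - c))
        rw [h6] at this
        simp [hd] at this ⊢
        linarith
    · refine ⟨c, by simp; linarith, ?_⟩
      have := norm_sub_norm_le x (x - c)
      simp only [sub_sub_cancel] at this
      linarith
  obtain ⟨z, hz1, hz2⟩ := hz
  have hsub : ball z (d/2) ⊆ ball c ρ \ ball (0 : E) 1 := by
    intro w hw
    have hw' : ‖w - z‖ < d/2 := by simpa [mem_ball, dist_eq_norm] using hw
    constructor
    · simp only [mem_ball, dist_eq_norm]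
      calc ‖w - c‖ ≤ ‖w - z‖ + ‖z - c‖ := by
            rw [show w - c = (w - z) + (z - c) by abel]; exact norm_add_le _ _
        _ < d/2 + (ρ - d/2) := by apply add_lt_add_of_lt_of_le hw' hz1
        _ = ρ := by ring
    · simp only [mem_ball, dist_eq_norm, sub_zero, not_lt]
      have := norm_sub_norm_le z (z - w)
      simp only [sub_sub_cancel] at this
      have hzw : ‖z - w‖ < d/2 := by rwa [norm_sub_rev] at hw'
      linarith
  -- measure comparison
  have hvolz : (volume (ball z (d/2))).toReal = (d/2)^n * v := by
    rw [Measure.addHaar_ball_of_pos volume z (by linarith : (0:ℝ) < d/2),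
      finrank_euclideanSpace_fin, ENNReal.toReal_mul, ENNReal.toReal_ofReal (by positivity)]
  have hdiff : (volume (ball c ρ \ ball (0 : E) 1)).toReal = a - b := by
    have h7 : ball c ρ \ ball (0 : E) 1 = ball c ρ \ (ball (0 : E) 1 ∩ ball c ρ) :=
      Set.diff_inter_self_eq_diff.symm
    rw [h7, measure_diff Set.inter_subset_right
      (measurableSet_ball.inter measurableSet_ball).nullMeasurableSet
      (lt_of_le_of_lt (measure_mono Set.inter_subset_right) measure_ball_lt_top).ne,
      ENNReal.toReal_sub_of_le (measure_mono Set.inter_subset_right) measure_ball_lt_top.ne]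
  have hle : (d/2)^n * v ≤ a - b := by
    rw [← hvolz, ← hdiff]
    exact ENNReal.toReal_mono (by
      exact ne_of_lt (lt_of_le_of_lt (measure_mono Set.diff_subset) measure_ball_lt_top))
      (measure_mono hsub)
  have hav : a < v / lam := by
    rw [lt_div_iff₀ hlam0, mul_comm]
    exact lt_of_lt_of_le hab hbv
  have hkey : (d/2)^n < (1 - lam)/lam := by
    have h8 : (d/2)^n * v < (1 - lam)/lam * v := by
      calc (d/2)^n * v ≤ a - b := hle
        _ < a - lam * a := by linarith
        _ = (1 - lam) * a := by ring
        _ < (1 - lam) * (v / lam) := by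
            apply mul_lt_mul_of_pos_left hav; linarith
        _ = (1 - lam)/lam * v := by ring
    exact lt_of_mul_lt_mul_right h8 hv0.le
  -- conclude d/2 < δ
  have hdδ : d/2 < δ := by
    rcases Nat.eq_zero_or_pos n with hn | hn
    · exfalso
      rw [hn, pow_zero] at hkey
      have : (1 - lam)/lam < 1 := by
        rw [div_lt_one hlam0]; linarith
      linarith
    · have hδpow : δ ^ n = (1 - lam)/lam := by
        rw [hδ, ← Real.rpow_natCast (((1 - lam)/lam) ^ (1/(n:ℝ))) n, ← Real.rpow_mul hq0,
          one_div, inv_mul_cancel₀ (by exact_mod_cast hn.ne' : (n:ℝ) ≠ 0), Real.rpow_one]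
      apply lt_of_pow_lt_pow_left₀ n hδ0
      rw [hδpow]; exact hkey
  simp only [mem_closedBall, dist_eq_norm, sub_zero]
  have : ‖x‖ = 1 + d := by simp [hd]
  linarith

end aux

theorem limiting_behavior_indicator_ball (n : ℕ) :
    Filter.Tendsto
      (fun lam : ℝ =>
        lam * (volume {x : EuclideanSpace ℝ (Fin n) |
          lam < uncenteredMaximal n
            ((Metric.ball (0 : EuclideanSpace ℝ (Fin n)) 1).indicator
              (fun _ => (1 : ℝ))) x}).toReal)
      (nhdsWithin 1 (Set.Iio 1))
      (nhds ((volume (Metric.ball (0 : EuclideanSpace ℝ (Fin n)) 1)).toReal)) := by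
  have hrw : ∀ lam : ℝ, {x : EuclideanSpace ℝ (Fin n) |
      lam < uncenteredMaximal n
        ((Metric.ball (0 : EuclideanSpace ℝ (Fin n)) 1).indicator (fun _ => (1 : ℝ))) x}
      = {x : EuclideanSpace ℝ (Fin n) | lam < uncenteredMaximal n (fB n) x} := fun _ => rfl
  simp only [hrw]
  set v := (volume (Metric.ball (0 : EuclideanSpace ℝ (Fin n)) 1)).toReal with hv
  have hv0 : 0 < v :=
    ENNReal.toReal_pos (measure_ball_pos _ _ one_pos).ne' measure_ball_lt_top.ne
  have tid : Filter.Tendsto (fun lam : ℝ => lam) (nhdsWithin 1 (Set.Iio 1)) (nhds 1) :=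
    Filter.tendsto_id.mono_left nhdsWithin_le_nhds
  have t1 : Filter.Tendsto (fun lam : ℝ => lam * v) (nhdsWithin 1 (Set.Iio 1)) (nhds v) := by
    simpa using tid.mul_const v
  have t2 : Filter.Tendsto
      (fun lam : ℝ => lam * ((1 + 2 * ((1 - lam)/lam) ^ (1/(n:ℝ)))^n * v))
      (nhdsWithin 1 (Set.Iio 1)) (nhds v) := by
    rcases Nat.eq_zero_or_pos n with hn | hn
    · subst hn
      simpa [pow_zero] using t1
    · have hq : Filter.Tendsto (fun lam : ℝ => (1 - lam)/lam) (nhdsWithin 1 (Set.Iio 1))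
          (nhds 0) := by
        have hc : ContinuousAt (fun lam : ℝ => (1 - lam)/lam) 1 :=
          ContinuousAt.div (by fun_prop) (by fun_prop) one_ne_zero
        have := hc.tendsto.mono_left (nhdsWithin_le_nhds (s := Set.Iio 1))
        simpa using this
      have hr : Filter.Tendsto (fun lam : ℝ => ((1 - lam)/lam) ^ (1/(n:ℝ)))
          (nhdsWithin 1 (Set.Iio 1)) (nhds 0) := by
        have hc : ContinuousAt (fun t : ℝ => t ^ (1/(n:ℝ))) 0 :=
          Real.continuousAt_rpow_const 0 _ (Or.inr (by positivity))
        have := hc.tendsto.comp hq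
        simpa [Function.comp_def, Real.zero_rpow (show ((n:ℝ))⁻¹ ≠ 0 by positivity)] using this
      have := tid.mul (((((tendsto_const_nhds (x := (1:ℝ))).add (hr.const_mul 2)).pow n).mul_const v))
      simpa using this
  apply tendsto_of_tendsto_of_tendsto_of_le_of_le' t1 t2
  · filter_upwards [Ioo_mem_nhdsLT_of_mem (show (1:ℝ) ∈ Set.Ioc (1/2:ℝ) 1 by constructor <;> norm_num)]
      with lam hlam
    have hfin : volume {x : EuclideanSpace ℝ (Fin n) | lam < uncenteredMaximal n (fB n) x} ≠ ⊤ :=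
      (lt_of_le_of_lt (measure_mono (upper_incl n hlam.1 hlam.2)) measure_closedBall_lt_top).ne
    have hle : v ≤ (volume {x : EuclideanSpace ℝ (Fin n) |
        lam < uncenteredMaximal n (fB n) x}).toReal :=
      ENNReal.toReal_mono hfin (measure_mono (lower_incl n hlam.2))
    have h0 : (0:ℝ) ≤ lam := by linarith [hlam.1]
    exact mul_le_mul_of_nonneg_left hle h0
  · filter_upwards [Ioo_mem_nhdsLT_of_mem (show (1:ℝ) ∈ Set.Ioc (1/2:ℝ) 1 by constructor <;> norm_num)]
      with lam hlam
    have hq0 : (0:ℝ) ≤ (1 - lam)/lam := div_nonneg (by linarith [hlam.2]) (by linarith [hlam.1])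
    have hδ0 : (0:ℝ) ≤ ((1 - lam)/lam) ^ (1/(n:ℝ)) := Real.rpow_nonneg hq0 _
    have hR0 : (0:ℝ) ≤ 1 + 2 * ((1 - lam)/lam) ^ (1/(n:ℝ)) := by linarith
    have hcb : (volume (Metric.closedBall (0 : EuclideanSpace ℝ (Fin n))
        (1 + 2 * ((1 - lam)/lam) ^ (1/(n:ℝ))))).toReal
        = (1 + 2 * ((1 - lam)/lam) ^ (1/(n:ℝ)))^n * v := by
      rw [Measure.addHaar_closedBall volume _ hR0, finrank_euclideanSpace_fin,
        ENNReal.toReal_mul, ENNReal.toReal_ofReal (by positivity)]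
    have hle : (volume {x : EuclideanSpace ℝ (Fin n) |
        lam < uncenteredMaximal n (fB n) x}).toReal
        ≤ (1 + 2 * ((1 - lam)/lam) ^ (1/(n:ℝ)))^n * v := by
      rw [← hcb]
      exact ENNReal.toReal_mono measure_closedBall_lt_top.ne
        (measure_mono (upper_incl n hlam.1 hlam.2))
    have h0 : (0:ℝ) ≤ lam := by linarith [hlam.1]
    exact mul_le_mul_of_nonneg_left hle h0
end
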